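/- Let q ∈ (0,1), let n be a positive integer, let p be a prime, and let m ≥ 1 be such that p^m divides n. Then P_q(p^m, n) = (∑_{k=0}^{n/p^m} φ_q(k, n/p^m)^p)^{p^{m−1}}. -/

import Mathlib

open Finset

/-- The binomial probability mass function. -/
noncomputable def phi (q : ℝ) (k n : ℕ) : ℝ :=
  (n.choose k : ℝ) * q ^ k * (1 - q) ^ (n - k)

/-- The Bernoulli(q) probability weight of an outcome `c : Fin n → Bool`. -/
noncomputable def bernWeight (q : ℝ) (n : ℕ) (c : Fin n → Bool) : ℝ :=
  q ^ (Finset.univ.filter (fun j => c j = true)).card *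
    (1 - q) ^ (n - (Finset.univ.filter (fun j => c j = true)).card)

/-- Probability that the random 0/1 polynomial ∑_j c_j x^j of degree < n (with i.i.d.
Bernoulli(q) coefficients) vanishes at the primitive d-th root of unity exp(2πi/d),
i.e. that it is divisible by the d-th cyclotomic polynomial. -/
noncomputable def Pqd (q : ℝ) (d n : ℕ) : ℝ :=
  ∑ c : Fin n → Bool,
    if (∑ j : Fin n,
          (if c j then (1 : ℂ) else 0) *
            Complex.exp (2 * Real.pi * Complex.I / d) ^ (j : ℕ)) = 0 then
      bernWeight q n c
    else 0

/-! ### Auxiliary lemmas -/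

/-- The number of trues of a boolean vector. -/
def cnt {M : ℕ} (h : Fin M → Bool) : ℕ := (univ.filter fun j => h j = true).card

lemma cnt_le {M : ℕ} (h : Fin M → Bool) : cnt h ≤ M := by
  simpa [cnt] using (Finset.card_filter_le univ fun j => h j = true).trans (by simp)

lemma card_count_eq (M k : ℕ) :
    (univ.filter fun c : Fin M → Bool => (univ.filter fun j => c j = true).card = k).card
      = M.choose k := by
  have : (univ.filter fun c : Fin M → Bool => (univ.filter fun j => c j = true).card = k).card
      = (Finset.powersetCard k (univ : Finset (Fin M))).card := by
    apply Finset.card_bij (fun c _ => univ.filter fun j => c j = true)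
    · intro c hc
      simp only [mem_filter, mem_univ, true_and] at hc
      simp [Finset.mem_powersetCard, hc]
    · intro c hc c' hc' h
      funext j
      have := Finset.ext_iff.mp h j
      simp only [mem_filter, mem_univ, true_and] at this
      cases hj : c j <;> cases hj' : c' j <;> simp_all
    · intro s hs
      refine ⟨fun j => j ∈ s, ?_, ?_⟩
      · simp only [mem_filter, mem_univ, true_and]
        rw [Finset.mem_powersetCard] at hs
        rw [← hs.2]
        congr 1
        ext j; simp
      · ext j; simp
  rw [this, Finset.card_powersetCard, Finset.card_univ, Fintype.card_fin]

lemma bernWeight_cnt (q : ℝ) (M : ℕ) (h : Fin M → Bool) :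
    bernWeight q M h = q ^ cnt h * (1 - q) ^ (M - cnt h) := rfl

lemma sum_wt_eq_phi (q : ℝ) (M k : ℕ) :
    (∑ h : Fin M → Bool, if cnt h = k then bernWeight q M h else 0) = phi q k M := by
  unfold cnt
  rw [← Finset.sum_filter]
  have : ∀ h ∈ univ.filter fun c : Fin M → Bool => (univ.filter fun j => c j = true).card = k,
      bernWeight q M h = q ^ k * (1 - q) ^ (M - k) := by
    intro h hh
    simp only [mem_filter, mem_univ, true_and] at hh
    rw [bernWeight, hh]
  rw [Finset.sum_congr rfl this, Finset.sum_const, card_count_eq, nsmul_eq_mul, phi, mul_assoc]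

lemma pqd_inner_sum (q : ℝ) (M p : ℕ) (hp : 0 < p) :
    (∑ g : Fin p → Fin M → Bool,
      if (∀ t, cnt (g t) = cnt (g ⟨0, hp⟩)) then ∏ t, bernWeight q M (g t) else 0)
      = ∑ k ∈ Finset.range (M + 1), phi q k M ^ p := by
  have per_g : ∀ g : Fin p → Fin M → Bool,
      (if (∀ t, cnt (g t) = cnt (g ⟨0, hp⟩)) then ∏ t, bernWeight q M (g t) else 0)
        = ∑ k ∈ Finset.range (M + 1),
            ∏ t, (if cnt (g t) = k then bernWeight q M (g t) else 0) := by
    intro g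
    have hprod : ∀ k, (∏ t, if cnt (g t) = k then bernWeight q M (g t) else 0)
        = if (∀ t, cnt (g t) = k) then ∏ t, bernWeight q M (g t) else 0 :=
      fun k => by rw [Fintype.prod_ite_zero]; congr
    simp_rw [hprod]
    by_cases hc : ∀ t, cnt (g t) = cnt (g ⟨0, hp⟩)
    · rw [if_pos hc]
      have : ∀ k, (∀ t, cnt (g t) = k) ↔ k = cnt (g ⟨0, hp⟩) := by
        intro k
        constructor
        · intro h; rw [← h ⟨0, hp⟩]
        · rintro rfl; exact hc
      simp_rw [this]
      rw [Finset.sum_ite_eq' (Finset.range (M + 1)) (cnt (g ⟨0, hp⟩))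
        (fun _ => ∏ t, bernWeight q M (g t))]
      rw [if_pos (Finset.mem_range.mpr (Nat.lt_succ_of_le (cnt_le _)))]
    · rw [if_neg hc]
      refine (Finset.sum_eq_zero fun k _ => ?_).symm
      rw [if_neg]
      intro h
      exact hc fun t => by rw [h t, h ⟨0, hp⟩]
  simp_rw [per_g]
  rw [Finset.sum_comm]
  refine Finset.sum_congr rfl fun k _ => ?_
  have hps := Finset.prod_univ_sum (fun _ : Fin p => (univ : Finset (Fin M → Bool)))
    (fun _ h => if cnt h = k then bernWeight q M h else 0)
  rw [Fintype.piFinset_univ] at hps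
  rw [← hps]
  rw [Finset.prod_congr rfl fun t _ => sum_wt_eq_phi q M k]
  rw [Finset.prod_const, Finset.card_univ, Fintype.card_fin]

open Polynomial in
lemma key_alg (p m : ℕ) (hp : p.Prime) (hm : 1 ≤ m) (N : ℕ → ℕ → ℕ) :
    (∑ s ∈ Finset.range (p ^ (m - 1)), ∑ t ∈ Finset.range p, (N s t : ℂ) *
        Complex.exp (2 * Real.pi * Complex.I / ((p : ℕ) ^ m : ℕ)) ^ (s + p ^ (m - 1) * t)) = 0
      ↔ ∀ s < p ^ (m - 1), ∀ t < p, N s t = N s 0 := by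
  set a : ℕ := p ^ (m - 1) with ha
  set ζ : ℂ := Complex.exp (2 * Real.pi * Complex.I / ((p : ℕ) ^ m : ℕ)) with hζdef
  have hppos : 0 < p := hp.pos
  have hp2 : 2 ≤ p := hp.two_le
  have hapos : 0 < a := Nat.pow_pos hppos
  have hpm : (p : ℕ) ^ m ≠ 0 := (Nat.pow_pos hppos).ne'
  have hζ : IsPrimitiveRoot ζ (p ^ m) := Complex.isPrimitiveRoot_exp _ hpm
  have hap : a * p = p ^ m := by rw [ha, ← pow_succ]; congr 1; omega
  have hω : IsPrimitiveRoot (ζ ^ a) p := hζ.pow (Nat.pos_of_ne_zero hpm) hap.symm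
  have hgeom : ∑ t ∈ Finset.range p, (ζ ^ a) ^ t = 0 := hω.geom_sum_eq_zero hp.one_lt
  have hp1 : p - 1 + 1 = p := Nat.succ_pred_eq_of_pos hppos
  have hlast : ζ ^ (a * (p - 1)) = -∑ t ∈ Finset.range (p - 1), (ζ ^ a) ^ t := by
    rw [← hp1, Finset.sum_range_succ] at hgeom
    rw [pow_mul]
    linear_combination hgeom
  have main_eq : (∑ s ∈ Finset.range a, ∑ t ∈ Finset.range p, (N s t : ℂ) * ζ ^ (s + a * t))
      = ∑ s ∈ Finset.range a, ∑ t ∈ Finset.range (p - 1),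
          ((N s t : ℂ) - (N s (p - 1) : ℂ)) * ζ ^ (s + a * t) := by
    refine Finset.sum_congr rfl fun s _ => ?_
    have h1 : (∑ t ∈ Finset.range p, (N s t : ℂ) * ζ ^ (s + a * t))
        = (∑ t ∈ Finset.range (p - 1), (N s t : ℂ) * ζ ^ (s + a * t))
          + (N s (p - 1) : ℂ) * (ζ ^ s * ζ ^ (a * (p - 1))) := by
      conv_lhs => rw [← hp1, Finset.sum_range_succ]
      rw [pow_add]
    rw [h1, hlast, mul_neg, mul_neg, ← sub_eq_add_neg]
    simp only [sub_mul, Finset.sum_sub_distrib]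
    congr 1
    rw [Finset.mul_sum, Finset.mul_sum]
    refine Finset.sum_congr rfl fun t _ => ?_
    rw [pow_add, pow_mul]
  set Q : ℚ[X] := ∑ s ∈ Finset.range a, ∑ t ∈ Finset.range (p - 1),
      Polynomial.C ((N s t : ℚ) - (N s (p - 1) : ℚ)) * Polynomial.X ^ (s + a * t) with hQ
  have haevalQ : Polynomial.aeval ζ Q
      = ∑ s ∈ Finset.range a, ∑ t ∈ Finset.range (p - 1),
          ((N s t : ℂ) - (N s (p - 1) : ℂ)) * ζ ^ (s + a * t) := by
    rw [hQ, map_sum]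
    refine Finset.sum_congr rfl fun s _ => ?_
    rw [map_sum]
    refine Finset.sum_congr rfl fun t _ => ?_
    simp [map_mul, map_pow]
  have hdeg_min : (minpoly ℚ ζ).natDegree = a * (p - 1) := by
    rw [← Polynomial.cyclotomic_eq_minpoly_rat hζ (Nat.pos_of_ne_zero hpm),
      Polynomial.natDegree_cyclotomic, Nat.totient_prime_pow hp (by omega : 0 < m)]
  have hQdeg : Q.natDegree ≤ a * (p - 1) - 1 := by
    refine Polynomial.natDegree_sum_le_of_forall_le _ _ fun s hs => ?_
    refine Polynomial.natDegree_sum_le_of_forall_le _ _ fun t ht => ?_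
    refine (Polynomial.natDegree_C_mul_X_pow_le _ _).trans ?_
    rw [Finset.mem_range] at hs ht
    have h1 : a * t ≤ a * (p - 2) := Nat.mul_le_mul_left a (by omega)
    have h2 : a * (p - 1) = a * (p - 2) + a := by rw [← Nat.mul_succ]; congr 1; omega
    omega
  constructor
  · intro h
    have hQ0 : Q = 0 := by
      by_contra hne
      have hdvd : minpoly ℚ ζ ∣ Q := minpoly.dvd ℚ ζ (by rw [haevalQ, ← main_eq]; exact h)
      have hle := Polynomial.natDegree_le_of_dvd hdvd hne
      rw [hdeg_min] at hle
      have : 1 ≤ a * (p - 1) :=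
        Nat.one_le_iff_ne_zero.mpr (Nat.mul_ne_zero hapos.ne' (by omega))
      omega
    have hcoeff : ∀ s < a, ∀ t < p - 1, (N s t : ℚ) - (N s (p - 1) : ℚ) = 0 := by
      intro s hs t ht
      have hc : Q.coeff (s + a * t) = (N s t : ℚ) - (N s (p - 1) : ℚ) := by
        rw [hQ, Polynomial.finset_sum_coeff]
        rw [Finset.sum_eq_single_of_mem s (Finset.mem_range.mpr hs)]
        · rw [Polynomial.finset_sum_coeff]
          rw [Finset.sum_eq_single_of_mem t (Finset.mem_range.mpr ht)]
          · rw [Polynomial.coeff_C_mul, Polynomial.coeff_X_pow, if_pos rfl, mul_one]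
          · intro t' _ hne
            rw [Polynomial.coeff_C_mul, Polynomial.coeff_X_pow, if_neg, mul_zero]
            intro hEq
            exact hne (Nat.eq_of_mul_eq_mul_left hapos (by omega)).symm
        · intro s' hs' hne
          rw [Polynomial.finset_sum_coeff]
          refine Finset.sum_eq_zero fun t' _ => ?_
          rw [Polynomial.coeff_C_mul, Polynomial.coeff_X_pow, if_neg, mul_zero]
          intro hEq
          apply hne
          have h1 : (s + a * t) % a = s % a := Nat.add_mul_mod_self_left s a t
          have h2 : (s' + a * t') % a = s' % a := Nat.add_mul_mod_self_left s' a t'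
          rw [Finset.mem_range] at hs'
          rw [Nat.mod_eq_of_lt hs] at h1
          rw [Nat.mod_eq_of_lt hs'] at h2
          rw [hEq] at h1
          omega
      rw [hQ0, Polynomial.coeff_zero] at hc
      exact hc.symm
    intro s hs t ht
    have key : ∀ t' < p - 1, N s t' = N s (p - 1) := by
      intro t' ht'
      have := hcoeff s hs t' ht'
      have h2 : (N s t' : ℚ) = (N s (p - 1) : ℚ) := by linarith
      exact_mod_cast h2
    rcases Nat.lt_or_ge t (p - 1) with h' | h'
    · rcases Nat.eq_zero_or_pos (p - 1) with h0 | h0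
      · omega
      · rw [key t h', ← key 0 h0]
    · have : t = p - 1 := by omega
      subst this
      rcases Nat.eq_zero_or_pos (p - 1) with h0 | h0
      · omega
      · rw [← key 0 h0]
  · intro h
    refine Finset.sum_eq_zero fun s hs => ?_
    have heq : ∀ t ∈ Finset.range p, (N s t : ℂ) * ζ ^ (s + a * t)
        = (N s 0 : ℂ) * ζ ^ s * (ζ ^ a) ^ t := by
      intro t ht
      rw [h s (Finset.mem_range.mp hs) t (Finset.mem_range.mp ht), pow_add, pow_mul, mul_assoc]
    rw [Finset.sum_congr rfl heq, ← Finset.mul_sum, hgeom, mul_zero]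

/-- Equation (4): for a prime power divisor p^m of n (m ≥ 1),
P_q(p^m, n) = (∑_{k=0}^{n/p^m} φ_q(k, n/p^m)^p)^{p^{m-1}}. -/
theorem Pqd_prime_pow (q : ℝ) (hq0 : 0 < q) (hq1 : q < 1) (n : ℕ) (hn : 0 < n)
    (p : ℕ) (hp : p.Prime) (m : ℕ) (hm : 1 ≤ m) (hpn : p ^ m ∣ n) :
    Pqd q (p ^ m) n =
      (∑ k ∈ Finset.range (n / p ^ m + 1), phi q k (n / p ^ m) ^ p) ^ (p ^ (m - 1)) := by
  classical
  have hppos : 0 < p := hp.pos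
  set a : ℕ := p ^ (m - 1) with ha
  set M : ℕ := n / p ^ m with hM
  have hapos : 0 < a := Nat.pow_pos hppos
  have hap : a * p = p ^ m := by rw [ha, ← pow_succ]; congr 1; omega
  have hnM : p ^ m * M = n := Nat.mul_div_cancel' hpn
  have hn_eq : M * (p * a) = n := by rw [mul_comm p a, hap, mul_comm]; exact hnM
  set ζ : ℂ := Complex.exp (2 * Real.pi * Complex.I / ((p : ℕ) ^ m : ℕ)) with hζdef
  have hζ : IsPrimitiveRoot ζ (p ^ m) :=
    Complex.isPrimitiveRoot_exp _ (Nat.pow_pos hppos).ne'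
  -- the index equivalence
  set E : Fin a × Fin p × Fin M ≃ Fin n :=
    ((((Equiv.prodAssoc (Fin a) (Fin p) (Fin M)).symm).trans
      (Equiv.prodCongr ((Equiv.prodComm (Fin a) (Fin p)).trans finProdFinEquiv)
        (Equiv.refl (Fin M)))).trans
      ((Equiv.prodComm (Fin (p * a)) (Fin M)).trans finProdFinEquiv)).trans
      (finCongr hn_eq) with hE
  have hEval : ∀ (s : Fin a) (t : Fin p) (u : Fin M),
      ((E (s, t, u)) : ℕ) = (s : ℕ) + a * t + p * a * u := by
    intro s t u
    simp [hE, finProdFinEquiv, Equiv.prodAssoc, Equiv.prodComm, Equiv.prodCongr, mul_comm]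
  -- transport of boolean vectors
  set T : (Fin a → Fin p → Fin M → Bool) → (Fin n → Bool) :=
    fun c' j => c' (E.symm j).1 (E.symm j).2.1 (E.symm j).2.2 with hT
  have hTE : ∀ (c' : Fin a → Fin p → Fin M → Bool) (s : Fin a) (t : Fin p) (u : Fin M),
      T c' (E (s, t, u)) = c' s t u := by
    intro c' s t u
    simp [hT]
  have hTbij : Function.Bijective T := by
    rw [Function.bijective_iff_has_inverse]
    refine ⟨fun c s t u => c (E (s, t, u)), ?_, ?_⟩
    · intro c'
      funext s t u
      simp [hT]
    · intro c
      funext j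
      simp only [hT]
      rw [show ((E.symm j).1, (E.symm j).2.1, (E.symm j).2.2) = E.symm j from rfl,
        Equiv.apply_symm_apply]
  have step1 : Pqd q (p ^ m) n = ∑ c' : Fin a → Fin p → Fin M → Bool,
      if (∑ j : Fin n, (if T c' j then (1 : ℂ) else 0) * ζ ^ (j : ℕ)) = 0 then
        bernWeight q n (T c') else 0 := by
    rw [Pqd]
    exact (Fintype.sum_bijective T hTbij _ _ fun _ => rfl).symm
  -- the count decomposition
  have hcnt : ∀ (c' : Fin a → Fin p → Fin M → Bool),
      (univ.filter fun j => T c' j = true).card = ∑ s : Fin a, ∑ t : Fin p, cnt (c' s t) := by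
    intro c'
    rw [Finset.card_filter]
    rw [← Equiv.sum_comp E (fun j => if T c' j = true then 1 else 0)]
    rw [Fintype.sum_prod_type]
    refine Finset.sum_congr rfl fun s _ => ?_
    rw [Fintype.sum_prod_type]
    refine Finset.sum_congr rfl fun t _ => ?_
    rw [cnt, Finset.card_filter]
    refine Finset.sum_congr rfl fun u _ => ?_
    rw [hTE]
  have hcnt_le : ∀ (c' : Fin a → Fin p → Fin M → Bool) (s : Fin a) (t : Fin p),
      cnt (c' s t) ≤ M := fun c' s t => cnt_le _
  -- the weight decomposition
  have hweight : ∀ (c' : Fin a → Fin p → Fin M → Bool),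
      bernWeight q n (T c') = ∏ s : Fin a, ∏ t : Fin p, bernWeight q M (c' s t) := by
    intro c'
    have hsub : (∑ s : Fin a, ∑ t : Fin p, (M - cnt (c' s t)))
        = n - ∑ s : Fin a, ∑ t : Fin p, cnt (c' s t) := by
      have h1 : (∑ s : Fin a, ∑ t : Fin p, (M - cnt (c' s t)))
          + (∑ s : Fin a, ∑ t : Fin p, cnt (c' s t))
          = ∑ s : Fin a, ∑ t : Fin p, M := by
        rw [← Finset.sum_add_distrib]
        refine Finset.sum_congr rfl fun s _ => ?_
        rw [← Finset.sum_add_distrib]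
        exact Finset.sum_congr rfl fun t _ => Nat.sub_add_cancel (hcnt_le c' s t)
      have h2 : (∑ _s : Fin a, ∑ _t : Fin p, M) = n := by
        simp only [Finset.sum_const, Finset.card_univ, Fintype.card_fin, smul_eq_mul]
        rw [← mul_assoc, hap, hnM]
      have h3 := (∑ s : Fin a, ∑ t : Fin p, cnt (c' s t))
      omega
    rw [bernWeight, hcnt c']
    have hrhs : (∏ s : Fin a, ∏ t : Fin p, bernWeight q M (c' s t))
        = q ^ (∑ s : Fin a, ∑ t : Fin p, cnt (c' s t)) *
          (1 - q) ^ (∑ s : Fin a, ∑ t : Fin p, (M - cnt (c' s t))) := by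
      simp only [bernWeight_cnt]
      rw [Finset.prod_congr rfl fun s _ => Finset.prod_mul_distrib, Finset.prod_mul_distrib,
        Finset.prod_congr rfl fun s _ => Finset.prod_pow_eq_pow_sum univ _ q,
        Finset.prod_pow_eq_pow_sum univ _ q,
        Finset.prod_congr rfl fun s _ => Finset.prod_pow_eq_pow_sum univ _ (1 - q),
        Finset.prod_pow_eq_pow_sum univ _ (1 - q)]
    rw [hrhs, hsub]
  -- the condition
  have hcond : ∀ (c' : Fin a → Fin p → Fin M → Bool),
      ((∑ j : Fin n, (if T c' j then (1 : ℂ) else 0) * ζ ^ (j : ℕ)) = 0)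
        ↔ (∀ (s : Fin a) (t : Fin p), cnt (c' s t) = cnt (c' s ⟨0, hppos⟩)) := by
    intro c'
    set N : ℕ → ℕ → ℕ := fun s t =>
      if hs : s < a then if ht : t < p then cnt (c' ⟨s, hs⟩ ⟨t, ht⟩) else 0 else 0 with hN
    have hsum : (∑ j : Fin n, (if T c' j then (1 : ℂ) else 0) * ζ ^ (j : ℕ))
        = ∑ s ∈ Finset.range a, ∑ t ∈ Finset.range p, (N s t : ℂ) * ζ ^ (s + a * t) := by
      rw [← Equiv.sum_comp E (fun j => (if T c' j then (1 : ℂ) else 0) * ζ ^ (j : ℕ))]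
      rw [Fintype.sum_prod_type]
      rw [← Fin.sum_univ_eq_sum_range
        (fun s => ∑ t ∈ Finset.range p, (N s t : ℂ) * ζ ^ (s + a * t)) a]
      refine Finset.sum_congr rfl fun s _ => ?_
      rw [Fintype.sum_prod_type]
      rw [← Fin.sum_univ_eq_sum_range (fun t => (N s t : ℂ) * ζ ^ ((s : ℕ) + a * t)) p]
      refine Finset.sum_congr rfl fun t _ => ?_
      have hNst : N s t = cnt (c' s t) := by
        rw [hN]
        simp [s.isLt, t.isLt]
      rw [hNst, cnt, Finset.card_filter]
      push_cast
      rw [Finset.sum_mul]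
      refine Finset.sum_congr rfl fun u _ => ?_
      rw [hTE, hEval]
      have hzpow : ζ ^ ((s : ℕ) + a * t + p * a * u) = ζ ^ ((s : ℕ) + a * t) := by
        rw [pow_add, pow_mul, mul_comm p a, hap, hζ.pow_eq_one, one_pow, mul_one]
      rw [hzpow]
    rw [hsum]
    conv_lhs => rw [ha]
    rw [key_alg p m hp hm N]
    constructor
    · intro h s t
      have h1 := h (s : ℕ) (ha ▸ s.isLt) (t : ℕ) t.isLt
      simp only [hN, s.isLt, t.isLt, hppos, dif_pos] at h1
      simpa using h1
    · intro h s hs t ht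
      have hs' : s < a := ha ▸ hs
      simp only [hN, hs', ht, hppos, dif_pos]
      exact h ⟨s, hs'⟩ ⟨t, ht⟩
  -- put everything together
  rw [step1]
  rw [Finset.sum_congr rfl fun c' _ => if_congr (hcond c') (hweight c') rfl]
  have hsplit : ∀ (c' : Fin a → Fin p → Fin M → Bool),
      (if (∀ (s : Fin a) (t : Fin p), cnt (c' s t) = cnt (c' s ⟨0, hppos⟩)) then
          ∏ s : Fin a, ∏ t : Fin p, bernWeight q M (c' s t) else 0)
        = ∏ s : Fin a, (if (∀ t : Fin p, cnt (c' s t) = cnt (c' s ⟨0, hppos⟩)) then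
            ∏ t : Fin p, bernWeight q M (c' s t) else 0) := by
    intro c'
    rw [Fintype.prod_ite_zero]
    congr
  rw [Finset.sum_congr rfl fun c' _ => hsplit c']
  have hps := Finset.prod_univ_sum (fun _ : Fin a => (univ : Finset (Fin p → Fin M → Bool)))
    (fun _ g => if (∀ t : Fin p, cnt (g t) = cnt (g ⟨0, hppos⟩)) then
      ∏ t : Fin p, bernWeight q M (g t) else 0)
  rw [Fintype.piFinset_univ] at hps
  rw [← hps]
  rw [Finset.prod_congr rfl fun s _ => pqd_inner_sum q M p hppos]
  rw [Finset.prod_const, Finset.card_univ, Fintype.card_fin]
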